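/- Let D ⊂ ℝ^d be a domain, p ∈ ∂D, p_k ∈ D with p fixed and X_k = (p − p_k)/‖p − p_k‖. If every projective map f: (−1,1) → D with f lying in the line through p_k in direction X_k has image contained in the ray {p − t·X_k : t > 0}, then the projective Kobayashi–Royden metric satisfies F_D(p_k; X_k) ≥ 1/‖p − p_k‖. -/

import Mathlib

/-- A map `f : ℝ → ℝ^d` is projective on the interval `(-1,1)` if it has the
linear-fractional form `t ↦ (c + u·t)⁻¹ • (a + t • b)` with nonvanishing
denominator on `(-1,1)`. -/
def IsProjectiveCurve {d : ℕ} (f : ℝ → EuclideanSpace ℝ (Fin d)) : Prop :=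
  ∃ (a b : EuclideanSpace ℝ (Fin d)) (c u : ℝ), ∀ t ∈ Set.Ioo (-1 : ℝ) 1,
    c + u * t ≠ 0 ∧ f t = (c + u * t)⁻¹ • (a + t • b)

/-- The projective Kobayashi–Royden metric
`F_D(p;X) = inf {2|V| : f projective, f : (-1,1) → D, f(0) = p, Df(0)(V) = X}`. -/
noncomputable def projKoba {d : ℕ} (D : Set (EuclideanSpace ℝ (Fin d)))
    (p X : EuclideanSpace ℝ (Fin d)) : ℝ :=
  sInf {t : ℝ | ∃ (f : ℝ → EuclideanSpace ℝ (Fin d)) (V : ℝ),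
    IsProjectiveCurve f ∧ Set.MapsTo f (Set.Ioo (-1 : ℝ) 1) D ∧
    f 0 = p ∧ V • deriv f 0 = X ∧ t = 2 * |V|}

/-- let `q ∈ D`, `p ∈ ∂D`, `X = (p - q)/‖p - q‖`. If every projective map
`f : (-1,1) → D` with `f(0) = q` and derivative along `X` has image contained in the ray
`{p - t·X : t > 0}`, then `F_D(q;X) ≥ 1/‖p - q‖`. -/
lemma endpoint_nonneg' {A B : ℝ} (h : ∀ t ∈ Set.Ioo (-1:ℝ) 1, 0 < A + B * t) :
    0 ≤ A + B ∧ 0 ≤ A - B := by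
  have hsub : Set.Icc (-1:ℝ) 1 ⊆ {t | 0 ≤ A + B * t} := by
    rw [← closure_Ioo (by norm_num : (-1:ℝ) ≠ 1)]
    exact closure_minimal (fun t ht => (h t ht).le)
      (isClosed_le continuous_const (by continuity))
  have h1 := hsub (Set.mem_Icc.mpr ⟨by norm_num, le_refl 1⟩)
  have h2 := hsub (Set.mem_Icc.mpr ⟨le_refl (-1:ℝ), by norm_num⟩)
  simp only [Set.mem_setOf_eq] at h1 h2
  constructor <;> linarith

lemma core {A B c u : ℝ} (hc : 0 < c)
    (hne : ∀ t ∈ Set.Ioo (-1:ℝ) 1, c + u * t ≠ 0)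
    (hpos : ∀ t ∈ Set.Ioo (-1:ℝ) 1, 0 < (A + B * t) * (c + u * t)) :
    |B * c - A * u| ≤ 2 * (A * c) := by
  have hu : |u| ≤ c := by
    by_contra hlt
    push_neg at hlt
    have hu0 : u ≠ 0 := fun h => by rw [h] at hlt; simp at hlt; linarith
    have habs : |(-c / u)| < 1 := by
      rw [abs_div, abs_neg, abs_of_pos hc, div_lt_one (abs_pos.mpr hu0)]
      exact hlt
    have ht : (-c / u) ∈ Set.Ioo (-1:ℝ) 1 := by
      rw [Set.mem_Ioo, ← abs_lt]; exact habs
    exact hne _ ht (by field_simp; ring)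
  have hden : ∀ t ∈ Set.Ioo (-1:ℝ) 1, 0 < c + u * t := by
    intro t ht
    have ht1 : |t| < 1 := abs_lt.mpr ⟨ht.1, ht.2⟩
    have : |u * t| < c := by
      rw [abs_mul]
      calc |u| * |t| ≤ c * |t| := mul_le_mul_of_nonneg_right hu (abs_nonneg t)
        _ < c * 1 := by exact mul_lt_mul_of_pos_left ht1 hc
        _ = c := mul_one c
    have := neg_abs_le (u * t)
    linarith
  have hAB : ∀ t ∈ Set.Ioo (-1:ℝ) 1, 0 < A + B * t := by
    intro t ht
    rcases mul_pos_iff.mp (hpos t ht) with ⟨h1, _⟩ | ⟨_, h2⟩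
    · exact h1
    · linarith [hden t ht]
  obtain ⟨e1, e2⟩ := endpoint_nonneg' hAB
  have hA : 0 < A := by have := hAB 0 (by norm_num); linarith
  obtain ⟨hu1, hu2⟩ := abs_le.mp hu
  rw [abs_le]
  constructor
  · nlinarith [mul_nonneg e1 hc.le, mul_nonneg hA.le (by linarith : (0:ℝ) ≤ c - u)]
  · nlinarith [mul_nonneg e2 hc.le, mul_nonneg hA.le (by linarith : (0:ℝ) ≤ c + u)]


open RealInnerProductSpace in
theorem stmt6 (d : ℕ) (hd : 1 ≤ d) (D : Set (EuclideanSpace ℝ (Fin d)))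
    (hD : IsOpen D) (p q : EuclideanSpace ℝ (Fin d))
    (hp : p ∈ frontier D) (hq : q ∈ D) (hpq : p ≠ q)
    (X : EuclideanSpace ℝ (Fin d)) (hX : X = ‖p - q‖⁻¹ • (p - q))
    (hray : ∀ (f : ℝ → EuclideanSpace ℝ (Fin d)) (V : ℝ),
      IsProjectiveCurve f → Set.MapsTo f (Set.Ioo (-1 : ℝ) 1) D →
      f 0 = q → V • deriv f 0 = X →
      ∀ t ∈ Set.Ioo (-1 : ℝ) 1, ∃ s : ℝ, 0 < s ∧ f t = p - s • X) :
    1 / ‖p - q‖ ≤ projKoba D q X := by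
  set r : ℝ := ‖p - q‖ with hr
  have hr0 : 0 < r := by
    rw [hr, norm_pos_iff]; exact sub_ne_zero.mpr hpq
  have hXnorm : ‖X‖ = 1 := by
    rw [hX, norm_smul, norm_inv, norm_norm, ← hr, inv_mul_cancel₀ hr0.ne']
  have hX0 : X ≠ 0 := by
    intro h; rw [h, norm_zero] at hXnorm; norm_num at hXnorm
  have hXX : ⟪X, X⟫ = 1 := by
    rw [real_inner_self_eq_norm_mul_norm, hXnorm]; norm_num
  have hqpr : q = p - r • X := by
    rw [hX, smul_smul, mul_inv_cancel₀ hr0.ne', one_smul, sub_sub_cancel]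
  unfold projKoba
  apply le_csInf
  · -- nonempty
    obtain ⟨ε, hε, hball⟩ := Metric.isOpen_iff.mp hD q hq
    refine ⟨2 * |2/ε|, fun t => q + t • ((ε/2) • X), 2/ε, ?_, ?_, by simp, ?_, rfl⟩
    · exact ⟨q, (ε/2) • X, 1, 0, fun t ht => ⟨by norm_num, by simp⟩⟩
    · intro t ht
      apply hball
      rw [Metric.mem_ball, dist_eq_norm]
      have : q + t • (ε/2) • X - q = t • (ε/2) • X := by abel
      rw [this, norm_smul, norm_smul, hXnorm, mul_one, Real.norm_eq_abs,
        Real.norm_eq_abs, abs_of_pos (by linarith : (0:ℝ) < ε/2)]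
      have ht1 : |t| < 1 := abs_lt.mpr ⟨ht.1, ht.2⟩
      nlinarith [abs_nonneg t]
    · have hder : HasDerivAt (fun t : ℝ => q + t • ((ε/2) • X)) ((ε/2) • X) 0 := by
        simpa using ((hasDerivAt_id (0:ℝ)).smul_const ((ε/2) • X)).const_add q
      rw [hder.deriv, smul_smul]
      have : (2 / ε) * (ε / 2) = 1 := by field_simp
      rw [this, one_smul]
  · -- lower bound
    rintro w ⟨f, V, hproj, hmaps, hf0, hV, rfl⟩
    -- normalize sign of c
    obtain ⟨a, b, c, u, h⟩ := hproj
    have hc0 : c ≠ 0 := by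
      have := (h 0 (by norm_num)).1; simpa using this
    -- replace by positive-c representative
    obtain ⟨a, b, c, u, hc, h⟩ :
        ∃ (a b : EuclideanSpace ℝ (Fin d)) (c u : ℝ), 0 < c ∧
          ∀ t ∈ Set.Ioo (-1:ℝ) 1, c + u * t ≠ 0 ∧ f t = (c + u * t)⁻¹ • (a + t • b) := by
      rcases hc0.lt_or_gt with hneg | hposc
      · refine ⟨-a, -b, -c, -u, by linarith, fun t ht => ?_⟩
        obtain ⟨h1, h2⟩ := h t ht
        refine ⟨by intro hz; apply h1; linarith, ?_⟩
        rw [h2]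
        have : (-c + -u * t) = -(c + u * t) := by ring
        rw [this]
        rw [show -a + t • -b = -(a + t • b) by module]
        rw [inv_neg, neg_smul, smul_neg, neg_neg]
      · exact ⟨a, b, c, u, hposc, h⟩
    -- derivative of f at 0
    have hmem : Set.Ioo (-1:ℝ) 1 ∈ nhds (0:ℝ) := Ioo_mem_nhds (by norm_num) (by norm_num)
    have hfg : f =ᶠ[nhds 0] fun t => (c + u * t)⁻¹ • (a + t • b) := by
      filter_upwards [hmem] with t ht using (h t ht).2
    have hden0 : c + u * 0 ≠ 0 := by simpa using hc.ne'
    have hlin : HasDerivAt (fun t : ℝ => c + u * t) u 0 := by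
      simpa using ((hasDerivAt_id (0:ℝ)).const_mul u).const_add c
    have hinv : HasDerivAt (fun t : ℝ => (c + u * t)⁻¹) (-u / c^2) 0 := by
      simpa [Pi.inv_def] using hlin.inv hden0
    have hvec : HasDerivAt (fun t : ℝ => a + t • b) b 0 := by
      simpa using ((hasDerivAt_id (0:ℝ)).smul_const b).const_add a
    have hg : HasDerivAt (fun t : ℝ => (c + u * t)⁻¹ • (a + t • b))
        ((-u / c^2) • a + c⁻¹ • b) 0 := by
      have e : (-u / c^2) • a + c⁻¹ • b
          = (c + u * 0)⁻¹ • b + (-u / c^2) • (a + (0:ℝ) • b) := by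
        simp [add_comm]
      rw [e]; exact hinv.smul hvec
    have hderiv : deriv f 0 = (-u / c^2) • a + c⁻¹ • b := by
      rw [Filter.EventuallyEq.deriv_eq hfg, hg.deriv]
    -- inner products
    set α : ℝ := ⟪X, a⟫ with hα
    set β : ℝ := ⟪X, b⟫ with hβ
    set π : ℝ := ⟪X, p⟫ with hπ
    set A : ℝ := π * c - α with hA
    set B : ℝ := π * u - β with hB
    -- key identity on Ioo
    have key : ∀ t ∈ Set.Ioo (-1:ℝ) 1, ∃ s : ℝ, 0 < s ∧ A + B * t = s * (c + u * t) := by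
      intro t ht
      obtain ⟨s, hs0, hst⟩ := hray f V ⟨a, b, c, u, h⟩ hmaps hf0 hV t ht
      refine ⟨s, hs0, ?_⟩
      have hι1 : ⟪X, f t⟫ = (c + u * t)⁻¹ * (α + t * β) := by
        rw [(h t ht).2, real_inner_smul_right, inner_add_right, real_inner_smul_right]
      have hι2 : ⟪X, f t⟫ = π - s := by
        rw [hst, inner_sub_right, real_inner_smul_right, hXX]; ring
      have hmul : (π - s) * (c + u * t) = α + t * β := by
        rw [← hι2, hι1, inv_mul_eq_div, div_mul_eq_mul_div, mul_div_assoc,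
          div_self (h t ht).1, mul_one]
      linear_combination hmul
    -- positivity hypothesis for core
    have hposc : ∀ t ∈ Set.Ioo (-1:ℝ) 1, 0 < (A + B * t) * (c + u * t) := by
      intro t ht
      obtain ⟨s, hs0, hst⟩ := key t ht
      rw [hst]
      have h2 : 0 < (c + u * t)^2 := pow_two_pos_of_ne_zero (h t ht).1
      calc (0:ℝ) < s * (c + u * t)^2 := mul_pos hs0 h2
        _ = s * (c + u * t) * (c + u * t) := by ring
    have hcore := core hc (fun t ht => (h t ht).1) hposc
    -- A = r * c
    have hf0c : f 0 = c⁻¹ • a := by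
      rw [(h 0 (by norm_num)).2]; simp
    have hι1 : (⟪X, q⟫ : ℝ) = c⁻¹ * α := by
      rw [← hf0, hf0c, real_inner_smul_right]
    have hι2 : (⟪X, q⟫ : ℝ) = π - r := by
      rw [hqpr, inner_sub_right, real_inner_smul_right, hXX]; ring
    have hαc : α = c * (π - r) := by
      have h3 : c⁻¹ * α = π - r := by rw [← hι1, hι2]
      field_simp at h3; linarith
    have hArc : A = r * c := by rw [hA, hαc]; ring
    rw [hArc] at hcore
    -- derivative relation
    have hinner : (⟪X, deriv f 0⟫ : ℝ) = (-u/c^2) * α + c⁻¹ * β := by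
      rw [hderiv, inner_add_right, real_inner_smul_right, real_inner_smul_right]
    have hV1 : V * ((-u/c^2) * α + c⁻¹ * β) = 1 := by
      rw [← hinner]
      have h4 : (⟪X, V • deriv f 0⟫ : ℝ) = ⟪X, X⟫ := by rw [hV]
      rwa [real_inner_smul_right, hXX] at h4
    have hc2 : (c:ℝ)^2 ≠ 0 := pow_ne_zero 2 hc.ne'
    have hV2 : V * (c * β - u * α) = c^2 := by
      have e : (-u/c^2) * α + c⁻¹ * β = (c * β - u * α) / c^2 := by
        field_simp; ring
      rw [e, ← mul_div_assoc] at hV1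
      field_simp at hV1
      linear_combination hV1
    have habs : |V| * |c * β - u * α| = c^2 := by
      rw [← abs_mul, hV2, abs_of_pos (by positivity : (0:ℝ) < c^2)]
    have hBA : B * c - r * c * u = -(c * β - u * α) := by rw [hB, hαc]; ring
    rw [hBA, abs_neg] at hcore
    have hVpos : 0 < |V| := by
      rcases eq_or_ne V 0 with h0 | h0
      · exfalso; rw [h0, zero_mul] at hV2; exact hc2 hV2.symm
      · exact abs_pos.mpr h0
    have hfin : 1 ≤ 2 * r * |V| := by
      have h5 := mul_le_mul_of_nonneg_left hcore (abs_nonneg V)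
      rw [habs] at h5
      have hc2pos : (0:ℝ) < c^2 := by positivity
      have h6 : 1 * c^2 ≤ (2 * r * |V|) * c^2 := by
        calc 1 * c^2 = c^2 := one_mul _
          _ ≤ |V| * (2 * (r * c * c)) := h5
          _ = (2 * r * |V|) * c^2 := by ring
      exact le_of_mul_le_mul_right h6 hc2pos
    rw [div_le_iff₀ hr0]
    have : 2 * |V| * r = 2 * r * |V| := by ring
    linarith
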